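/- The densities of the generalized Simons cones converge to √2 as both parameters tend to infinity: the function (m,l) ↦ D(m,l) = (σ_m·σ_l/σ_{m+l})·(m/(m+l))^{m/2}·(l/(m+l))^{l/2} tends to √2 along the filter atTop ×ˢ atTop on ℕ × ℕ (i.e., for any sequences m_k → ∞ and l_k → ∞, D(m_k, l_k) → √2). -/

import Mathlib

/-- `σ_n`, the area of the unit sphere `S^n ⊆ ℝ^{n+1}`. -/
noncomputable def sphereArea (n : ℕ) : ℝ :=
  ((n : ℝ) + 1) * Real.pi ^ (((n : ℝ) + 1) / 2) / Real.Gamma (((n : ℝ) + 3) / 2)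

/-- `D(m,l)`, the density at the vertex of the generalized Simons cone `C_{m,l}`. -/
noncomputable def simonsDensity (m l : ℕ) : ℝ :=
  (sphereArea m * sphereArea l / sphereArea (m + l)) *
    ((m : ℝ) / ((m : ℝ) + (l : ℝ))) ^ ((m : ℝ) / 2) *
    ((l : ℝ) / ((m : ℝ) + (l : ℝ))) ^ ((l : ℝ) / 2)

open Real Filter Nat

/-- Stirling-type normalizing denominator for `Γ((x+1)/2)`. -/
noncomputable def gden (x : ℝ) : ℝ :=
  Real.sqrt (2*Real.pi) * ((x+1)/2) ^ (x/2) * Real.exp (-((x+1)/2))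

/-- Stirling ratio for `Γ((x+1)/2)`; tends to 1 along the naturals. -/
noncomputable def gr (x : ℝ) : ℝ := Real.Gamma ((x+1)/2) / gden x

/-- `((x+1)/x)^(x/2)`, tending to `exp (1/2)`. -/
noncomputable def qf (x : ℝ) : ℝ := ((x+1)/x) ^ (x/2)

lemma sphereArea_eq (n : ℕ) :
    sphereArea n = 2 * Real.pi ^ (((n : ℝ) + 1) / 2) / Real.Gamma (((n : ℝ) + 1) / 2) := by
  have h0 : ((n:ℝ)+1)/2 ≠ 0 := by positivity
  have h1 : Real.Gamma (((n : ℝ) + 3) / 2) = ((n:ℝ)+1)/2 * Real.Gamma (((n : ℝ) + 1) / 2) := by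
    have h : ((n:ℝ)+3)/2 = ((n:ℝ)+1)/2 + 1 := by ring
    rw [h, Real.Gamma_add_one h0]
  rw [sphereArea, h1]
  have h2 : Real.Gamma (((n : ℝ) + 1) / 2) ≠ 0 := (Real.Gamma_pos_of_pos (by positivity)).ne'
  field_simp

lemma key (x y : ℝ) (hx : 1 ≤ x) (hy : 1 ≤ y) :
    (2*Real.pi^((x+1)/2)/Real.Gamma ((x+1)/2)) * (2*Real.pi^((y+1)/2)/Real.Gamma ((y+1)/2)) /
      (2*Real.pi^((x+y+1)/2)/Real.Gamma ((x+y+1)/2)) * (x/(x+y))^(x/2) * (y/(x+y))^(y/2)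
    = Real.sqrt 2 * Real.exp 2⁻¹ * (gr (x+y) / (gr x * gr y)) * (qf (x+y) / (qf x * qf y)) := by
  have hx0 : (0:ℝ) < x := by linarith
  have hy0 : (0:ℝ) < y := by linarith
  have hxy : (0:ℝ) < x + y := by linarith
  have hGA : Real.Gamma ((x+1)/2) ≠ 0 := (Real.Gamma_pos_of_pos (by linarith)).ne'
  have hGB : Real.Gamma ((y+1)/2) ≠ 0 := (Real.Gamma_pos_of_pos (by linarith)).ne'
  have hGC : Real.Gamma ((x+y+1)/2) ≠ 0 := (Real.Gamma_pos_of_pos (by linarith)).ne'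
  have hA : ((x+1)/2) ^ (x/2) = (x/2)^(x/2) * ((x+1)/x)^(x/2) := by
    rw [← Real.mul_rpow (by positivity) (by positivity)]
    congr 1; field_simp
  have hB : ((y+1)/2) ^ (y/2) = (y/2)^(y/2) * ((y+1)/y)^(y/2) := by
    rw [← Real.mul_rpow (by positivity) (by positivity)]
    congr 1; field_simp
  have hC : ((x+y+1)/(x+y)) ^ ((x+y)/2) =
      ((x+y+1)/2)^((x+y)/2) * ((2/(x+y))^(x/2) * (2/(x+y))^(y/2)) := by
    rw [← Real.rpow_add (by positivity), show x/2+y/2 = (x+y)/2 by ring,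
      ← Real.mul_rpow (by positivity) (by positivity)]
    congr 1; field_simp
  have hx1 : (x/(x+y))^(x/2) = (x/2)^(x/2) * (2/(x+y))^(x/2) := by
    rw [← Real.mul_rpow (by positivity) (by positivity)]
    congr 1; field_simp
  have hy1 : (y/(x+y))^(y/2) = (y/2)^(y/2) * (2/(x+y))^(y/2) := by
    rw [← Real.mul_rpow (by positivity) (by positivity)]
    congr 1; field_simp
  have hpi : Real.pi^((x+1)/2) * Real.pi^((y+1)/2) = Real.sqrt Real.pi * Real.pi^((x+y+1)/2) := by
    rw [← Real.rpow_add pi_pos, Real.sqrt_eq_rpow, ← Real.rpow_add pi_pos]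
    congr 1; ring
  have hu : Real.exp (2⁻¹ : ℝ) = Real.exp (-((x+y+1)/2)) /
      (Real.exp (-((x+1)/2)) * Real.exp (-((y+1)/2))) := by
    rw [← Real.exp_add, ← Real.exp_sub]; congr 1; ring
  have hs2 : Real.sqrt 2 = 2*Real.sqrt Real.pi / Real.sqrt (2*Real.pi) := by
    rw [eq_div_iff (by positivity), Real.sqrt_mul (by norm_num)]
    ring_nf
    rw [Real.sq_sqrt (by norm_num)]
    ring
  have hpi' : Real.pi^((x+1)/2) = Real.sqrt Real.pi * Real.pi^((x+y+1)/2) / Real.pi^((y+1)/2) := by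
    rw [eq_div_iff (by positivity)]; exact hpi
  unfold gr gden qf
  rw [hx1, hy1, hA, hB, hC, hu, hs2, hpi']
  have h1 : ((x/2:ℝ))^(x/2) ≠ 0 := by positivity
  have h2 : ((y/2:ℝ))^(y/2) ≠ 0 := by positivity
  have h3 : ((2/(x+y):ℝ))^(x/2) ≠ 0 := by positivity
  have h4 : ((2/(x+y):ℝ))^(y/2) ≠ 0 := by positivity
  have h5 : (((x+1)/x:ℝ))^(x/2) ≠ 0 := by positivity
  have h6 : (((y+1)/y:ℝ))^(y/2) ≠ 0 := by positivity
  have h7 : (((x+y+1)/2:ℝ))^((x+y)/2) ≠ 0 := by positivity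
  have h8 : Real.sqrt (2*Real.pi) ≠ 0 := by positivity
  have h12 : Real.pi^((x+y+1)/2) ≠ 0 := by positivity
  field_simp

lemma fact_eq (n : ℕ) (hn : 1 ≤ n) :
    (n ! : ℝ) = Stirling.stirlingSeq n * (Real.sqrt (2*n) * ((n:ℝ)/Real.exp 1)^n) := by
  have hn0 : (0:ℝ) < n := by exact_mod_cast hn
  have hne : (Real.sqrt (2*n) * ((n:ℝ)/Real.exp 1)^n) ≠ 0 :=
    mul_ne_zero (by positivity) (pow_ne_zero _ (div_ne_zero hn0.ne' (Real.exp_ne_zero 1)))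
  rw [Stirling.stirlingSeq, div_mul_cancel₀]
  exact hne

lemma gamma_nat_add_half (j : ℕ) :
    Real.Gamma ((j:ℝ) + 1/2) = ((2*j)! : ℝ) * (2:ℝ)^(-(2*(j:ℝ))) * Real.sqrt Real.pi / (j ! : ℝ) := by
  have h := Real.Gamma_mul_Gamma_add_half ((j:ℝ) + 1/2)
  rw [show (j:ℝ) + 1/2 + 1/2 = (j:ℝ) + 1 by ring] at h
  rw [Real.Gamma_nat_eq_factorial] at h
  rw [show 2*((j:ℝ)+1/2) = ((2*j : ℕ):ℝ) + 1 by push_cast; ring] at h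
  rw [Real.Gamma_nat_eq_factorial] at h
  rw [show (1:ℝ)-(((2*j:ℕ):ℝ)+1) = -(2*(j:ℝ)) by push_cast; ring] at h
  have hf : ((j ! :ℕ):ℝ) ≠ 0 := by positivity
  field_simp at h ⊢
  linarith [h]

lemma gr_even (j : ℕ) (hj : 1 ≤ j) :
    gr (2*(j:ℝ)) = (Stirling.stirlingSeq (2*j) / Stirling.stirlingSeq j) * Real.exp 2⁻¹ /
      (1 + (1/2)/(j:ℝ))^j := by
  have hj0 : (0:ℝ) < j := by exact_mod_cast hj
  unfold gr gden
  rw [show (2*(j:ℝ)+1)/2 = (j:ℝ)+1/2 by ring, gamma_nat_add_half,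
    fact_eq (2*j) (by omega), fact_eq j hj,
    show (2*(j:ℝ))/2 = (j:ℝ) by ring]
  have e1 : ((j:ℝ)+1/2) ^ ((j:ℝ)) = ((j:ℝ)+1/2)^(j:ℕ) := by
    rw [Real.rpow_natCast]
  have e2 : (2:ℝ)^(-(2*(j:ℝ))) = ((2:ℝ)^(2*j:ℕ))⁻¹ := by
    rw [← Real.rpow_natCast 2 (2*j), ← Real.rpow_neg (by norm_num)]
    push_cast; ring_nf
  have e3 : Real.exp (-((j:ℝ)+1/2)) = ((Real.exp 1)^(j:ℕ) * Real.exp 2⁻¹)⁻¹ := by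
    rw [← Real.exp_nat_mul, ← Real.exp_add, ← Real.exp_neg]
    congr 1; push_cast; ring
  have e4 : ((1:ℝ) + (1/2)/(j:ℝ))^j = ((j:ℝ)+1/2)^(j:ℕ) / ((j:ℝ))^(j:ℕ) := by
    rw [← div_pow]
    congr 1
    field_simp
  have e5 : Real.sqrt (2*((2*j:ℕ):ℝ)) = Real.sqrt 2 * Real.sqrt (2*(j:ℝ)) := by
    push_cast
    rw [show (2:ℝ)*(2*(j:ℝ)) = 2*(2*(j:ℝ)) by ring, Real.sqrt_mul (by norm_num)]
  have e6 : Real.sqrt (2*Real.pi) = Real.sqrt 2 * Real.sqrt Real.pi :=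
    Real.sqrt_mul (by norm_num) _
  rw [e1, e2, e3, e4, e5, e6]
  have n1 : (0:ℝ) < Stirling.stirlingSeq j :=
    div_pos (by exact_mod_cast j.factorial_pos)
      (mul_pos (Real.sqrt_pos.mpr (by positivity)) (pow_pos (div_pos hj0 (Real.exp_pos 1)) _))
  have n2 : ((j:ℝ)+1/2)^(j:ℕ) ≠ 0 := by positivity
  have n3 : ((j:ℝ))^(j:ℕ) ≠ 0 := pow_ne_zero _ hj0.ne'
  have n4 : Real.sqrt (2*(j:ℝ)) ≠ 0 := by positivity
  have n5 : (Real.exp 1)^(j:ℕ) ≠ 0 := pow_ne_zero _ (Real.exp_ne_zero 1)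
  have n6 : Real.sqrt Real.pi ≠ 0 := by positivity
  push_cast
  field_simp
  ring_nf
  have hE : Real.exp 1 ^ j * (Real.exp 1)⁻¹ ^ j = 1 := by
    rw [← mul_pow, mul_inv_cancel₀ (Real.exp_ne_zero 1), one_pow]
  linear_combination (Stirling.stirlingSeq (j*2) * (j:ℝ)^(j*2) * (Real.exp 1)⁻¹ ^ j * 2^(j*2)) * hE

lemma gr_odd (j : ℕ) (hj : 1 ≤ j) :
    gr (2*(j:ℝ)+1) = (Stirling.stirlingSeq j / Real.sqrt Real.pi) * Real.exp 1 *
      Real.sqrt ((j:ℝ)/((j:ℝ)+1)) / (1 + 1/(j:ℝ))^j := by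
  have hj0 : (0:ℝ) < j := by exact_mod_cast hj
  unfold gr gden
  rw [show (2*(j:ℝ)+1+1)/2 = (j:ℝ)+1 by ring, Real.Gamma_nat_eq_factorial,
    show (2*(j:ℝ)+1)/2 = (j:ℝ)+1/2 by ring, fact_eq j hj]
  have e7 : ((j:ℝ)+1)^((j:ℝ)+1/2) = ((j:ℝ)+1)^(j:ℕ) * Real.sqrt ((j:ℝ)+1) := by
    rw [Real.rpow_add (by positivity), Real.rpow_natCast, Real.sqrt_eq_rpow]
  have e8 : Real.exp (-((j:ℝ)+1)) = ((Real.exp 1)^(j:ℕ) * Real.exp 1)⁻¹ := by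
    rw [← Real.exp_nat_mul, ← Real.exp_add, ← Real.exp_neg]
    congr 1; ring
  have e9 : ((1:ℝ) + 1/(j:ℝ))^j = ((j:ℝ)+1)^(j:ℕ) / ((j:ℝ))^(j:ℕ) := by
    rw [← div_pow]
    congr 1
    field_simp
  have e10 : Real.sqrt ((j:ℝ)/((j:ℝ)+1)) = Real.sqrt (j:ℝ) / Real.sqrt ((j:ℝ)+1) :=
    Real.sqrt_div hj0.le _
  have e11 : Real.sqrt (2*(j:ℝ)) = Real.sqrt 2 * Real.sqrt (j:ℝ) :=
    Real.sqrt_mul (by norm_num) _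
  have e6 : Real.sqrt (2*Real.pi) = Real.sqrt 2 * Real.sqrt Real.pi :=
    Real.sqrt_mul (by norm_num) _
  rw [e7, e8, e9, e10, e11, e6]
  have n2 : ((j:ℝ)+1)^(j:ℕ) ≠ 0 := by positivity
  have n3 : ((j:ℝ))^(j:ℕ) ≠ 0 := pow_ne_zero _ hj0.ne'
  have n4 : Real.sqrt ((j:ℝ)) ≠ 0 := Real.sqrt_ne_zero'.mpr hj0
  have n4' : Real.sqrt ((j:ℝ)+1) ≠ 0 := Real.sqrt_ne_zero'.mpr (by positivity)
  have n5 : (Real.exp 1)^(j:ℕ) ≠ 0 := pow_ne_zero _ (Real.exp_ne_zero 1)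
  have n6 : Real.sqrt Real.pi ≠ 0 := by positivity
  have hE : Real.exp 1 ^ j * (Real.exp 1)⁻¹ ^ j = 1 := by
    rw [← mul_pow, mul_inv_cancel₀ (Real.exp_ne_zero 1), one_pow]
  field_simp
  linear_combination (Stirling.stirlingSeq j * (j:ℝ)^j) * hE

lemma tendsto_even_odd {f : ℕ → ℝ} {c : ℝ} (he : Filter.Tendsto (fun k => f (2*k)) atTop (nhds c))
    (ho : Filter.Tendsto (fun k => f (2*k+1)) atTop (nhds c)) :
    Filter.Tendsto f atTop (nhds c) := by
  rw [Filter.tendsto_def] at *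
  intro s hs
  rcases Filter.mem_atTop_sets.mp (he s hs) with ⟨N₁, h₁⟩
  rcases Filter.mem_atTop_sets.mp (ho s hs) with ⟨N₂, h₂⟩
  refine Filter.mem_atTop_sets.mpr ⟨2*N₁+2*N₂+2, fun n hn => ?_⟩
  rcases Nat.even_or_odd n with ⟨k, hk⟩ | ⟨k, hk⟩
  · have hk' : n = 2*k := by omega
    rw [hk']
    exact h₁ k (by omega)
  · have hk' : n = 2*k+1 := by omega
    rw [hk']
    exact h₂ k (by omega)

lemma tendsto_two_mul : Filter.Tendsto (fun k : ℕ => 2*k) atTop atTop :=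
  Filter.tendsto_atTop_atTop_of_monotone (fun a b h => by omega) (fun b => ⟨b, by omega⟩)

lemma gr_tendsto : Filter.Tendsto (fun m : ℕ => gr (m:ℝ)) atTop (nhds 1) := by
  have hst := Stirling.tendsto_stirlingSeq_sqrt_pi
  have hpi : Real.sqrt Real.pi ≠ 0 := by positivity
  apply tendsto_even_odd
  · -- even
    have lim : Filter.Tendsto (fun k : ℕ => (Stirling.stirlingSeq (2*k) / Stirling.stirlingSeq k) *
        Real.exp 2⁻¹ / (1 + (1/2)/(k:ℝ))^k) atTop
        (nhds ((Real.sqrt Real.pi / Real.sqrt Real.pi) * Real.exp 2⁻¹ / Real.exp (1/2))) := by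
      exact (((hst.comp tendsto_two_mul).div hst hpi).mul tendsto_const_nhds).div
        (Real.tendsto_one_add_div_pow_exp (1/2)) (Real.exp_ne_zero _)
    have h1 : ((Real.sqrt Real.pi / Real.sqrt Real.pi) * Real.exp 2⁻¹ / Real.exp (1/2)) = 1 := by
      rw [div_self hpi, one_mul]
      norm_num
    rw [h1] at lim
    apply lim.congr'
    filter_upwards [Filter.eventually_ge_atTop 1] with k hk
    rw [← gr_even k hk]
    norm_num
  · -- odd
    have lsq : Filter.Tendsto (fun k : ℕ => Real.sqrt ((k:ℝ)/((k:ℝ)+1))) atTop (nhds 1) := by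
      have h1 : Filter.Tendsto (fun k : ℕ => (k:ℝ)/((k:ℝ)+1)) atTop (nhds 1) :=
        tendsto_natCast_div_add_atTop (1:ℝ)
      have h2 := (Real.continuous_sqrt.tendsto 1).comp h1
      rw [Real.sqrt_one] at h2
      exact h2.congr (fun k => rfl)
    have lim : Filter.Tendsto (fun k : ℕ => (Stirling.stirlingSeq k / Real.sqrt Real.pi) *
        Real.exp 1 * Real.sqrt ((k:ℝ)/((k:ℝ)+1)) / (1 + 1/(k:ℝ))^k) atTop
        (nhds ((Real.sqrt Real.pi / Real.sqrt Real.pi) * Real.exp 1 * 1 / Real.exp 1)) := by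
      exact (((hst.div tendsto_const_nhds hpi).mul tendsto_const_nhds).mul lsq).div
        (Real.tendsto_one_add_div_pow_exp 1) (Real.exp_ne_zero _)
    have h1 : ((Real.sqrt Real.pi / Real.sqrt Real.pi) * Real.exp 1 * 1 / Real.exp 1) = 1 := by
      rw [div_self hpi, one_mul, mul_one, div_self (Real.exp_ne_zero 1)]
    rw [h1] at lim
    apply lim.congr'
    filter_upwards [Filter.eventually_ge_atTop 1] with k hk
    rw [← gr_odd k hk]
    norm_num

lemma qf_tendsto : Filter.Tendsto (fun n : ℕ => qf (n:ℝ)) atTop (nhds (Real.exp 2⁻¹)) := by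
  have h1 : Filter.Tendsto (fun n : ℕ => ((1:ℝ) + 1/(n:ℝ))^n) atTop (nhds (Real.exp 1)) :=
    Real.tendsto_one_add_div_pow_exp 1
  have h2 : ContinuousAt (fun x : ℝ => x ^ ((2:ℝ))⁻¹) (Real.exp 1) :=
    Real.continuousAt_rpow_const _ _ (Or.inl (Real.exp_ne_zero 1))
  have h3 := (h2.tendsto.comp h1)
  rw [show Real.exp 1 ^ ((2:ℝ))⁻¹ = Real.exp 2⁻¹ by rw [Real.exp_one_rpow]] at h3
  apply h3.congr'
  filter_upwards [Filter.eventually_ge_atTop 1] with n hn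
  have hn0 : (0:ℝ) < n := by exact_mod_cast hn
  show (((1:ℝ) + 1/(n:ℝ))^(n:ℕ)) ^ ((2:ℝ))⁻¹ = qf (n:ℝ)
  unfold qf
  rw [show ((n:ℝ)+1)/(n:ℝ) = 1 + 1/(n:ℝ) by field_simp, show ((n:ℝ))/2 = (n:ℝ)*(2:ℝ)⁻¹ by ring,
    Real.rpow_mul (by positivity), Real.rpow_natCast]

lemma bridge (m l : ℕ) (hm : 1 ≤ m) (hl : 1 ≤ l) :
    simonsDensity m l = Real.sqrt 2 * Real.exp 2⁻¹ *
      (gr ((m:ℝ)+(l:ℝ)) / (gr (m:ℝ) * gr (l:ℝ))) *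
      (qf ((m:ℝ)+(l:ℝ)) / (qf (m:ℝ) * qf (l:ℝ))) := by
  have hm1 : (1:ℝ) ≤ (m:ℝ) := by exact_mod_cast hm
  have hl1 : (1:ℝ) ≤ (l:ℝ) := by exact_mod_cast hl
  have h := key (m:ℝ) (l:ℝ) hm1 hl1
  rw [simonsDensity, sphereArea_eq, sphereArea_eq, sphereArea_eq]
  push_cast
  convert h using 2

theorem simonsDensity_tendsto_sqrt_two :
    Filter.Tendsto (fun p : ℕ × ℕ => simonsDensity p.1 p.2)
      (Filter.atTop ×ˢ Filter.atTop) (nhds (Real.sqrt 2)) := by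
  have hsum : Filter.Tendsto (fun p : ℕ × ℕ => p.1 + p.2) (Filter.atTop ×ˢ Filter.atTop)
      Filter.atTop :=
    Filter.tendsto_atTop_mono (fun p => Nat.le_add_right p.1 p.2) Filter.tendsto_fst
  have hgr1 : Filter.Tendsto (fun p : ℕ × ℕ => gr (p.1:ℝ)) (Filter.atTop ×ˢ Filter.atTop)
      (nhds 1) := gr_tendsto.comp Filter.tendsto_fst
  have hgr2 : Filter.Tendsto (fun p : ℕ × ℕ => gr (p.2:ℝ)) (Filter.atTop ×ˢ Filter.atTop)
      (nhds 1) := gr_tendsto.comp Filter.tendsto_snd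
  have hgr3 : Filter.Tendsto (fun p : ℕ × ℕ => gr ((p.1:ℝ)+(p.2:ℝ)))
      (Filter.atTop ×ˢ Filter.atTop) (nhds 1) := by
    have := gr_tendsto.comp hsum
    exact this.congr (fun p => by simp [Function.comp_apply, Nat.cast_add])
  have hqf1 : Filter.Tendsto (fun p : ℕ × ℕ => qf (p.1:ℝ)) (Filter.atTop ×ˢ Filter.atTop)
      (nhds (Real.exp 2⁻¹)) := qf_tendsto.comp Filter.tendsto_fst
  have hqf2 : Filter.Tendsto (fun p : ℕ × ℕ => qf (p.2:ℝ)) (Filter.atTop ×ˢ Filter.atTop)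
      (nhds (Real.exp 2⁻¹)) := qf_tendsto.comp Filter.tendsto_snd
  have hqf3 : Filter.Tendsto (fun p : ℕ × ℕ => qf ((p.1:ℝ)+(p.2:ℝ)))
      (Filter.atTop ×ˢ Filter.atTop) (nhds (Real.exp 2⁻¹)) := by
    have := qf_tendsto.comp hsum
    exact this.congr (fun p => by simp [Function.comp_apply, Nat.cast_add])
  have lim : Filter.Tendsto (fun p : ℕ × ℕ => Real.sqrt 2 * Real.exp 2⁻¹ *
      (gr ((p.1:ℝ)+(p.2:ℝ)) / (gr (p.1:ℝ) * gr (p.2:ℝ))) *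
      (qf ((p.1:ℝ)+(p.2:ℝ)) / (qf (p.1:ℝ) * qf (p.2:ℝ))))
      (Filter.atTop ×ˢ Filter.atTop)
      (nhds (Real.sqrt 2 * Real.exp 2⁻¹ * (1 / (1*1)) *
        (Real.exp 2⁻¹ / (Real.exp 2⁻¹ * Real.exp 2⁻¹)))) := by
    exact (tendsto_const_nhds.mul (hgr3.div (hgr1.mul hgr2) (by norm_num))).mul
      (hqf3.div (hqf1.mul hqf2) (mul_ne_zero (Real.exp_ne_zero _) (Real.exp_ne_zero _)))
  have hval : Real.sqrt 2 * Real.exp 2⁻¹ * (1 / (1*1)) *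
      (Real.exp 2⁻¹ / (Real.exp 2⁻¹ * Real.exp 2⁻¹)) = Real.sqrt 2 := by
    field_simp
  rw [hval] at lim
  apply lim.congr'
  have hev : ∀ᶠ p : ℕ × ℕ in Filter.atTop ×ˢ Filter.atTop, 1 ≤ p.1 ∧ 1 ≤ p.2 :=
    (Filter.eventually_ge_atTop 1).prod_mk (Filter.eventually_ge_atTop 1)
  filter_upwards [hev] with p hp
  exact (bridge p.1 p.2 hp.1 hp.2).symm
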